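/- Let $\Omega = \prod_{i=1}^n C_i$ and let $P_{\text{mix}} = \sum_{i=1}^m \pi_i P_{t_i}$ be a finite mixture of interventional distributions on a Bayesian network with node $n$ last in topological order, with $\pi_i > 0$. Then the marginal $\sum_{v \in C_n} P_{\text{mix}}(\cdot, v)$ on the first $n-1$ coordinates is itself a finite mixture of interventional distributions on the marginal Bayesian network, with targets obtained from the $t_i$ by removing any assignment to node $n$, and with weights obtained by summing $\pi_i$ over targets that project to the same reduced target. -/

import Mathlib

open Finset

section Aux
variable {n m : ℕ} {C : Fin (n + 1) → Type*} [∀ i, DecidableEq (C i)]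
variable (T : Fin m → Finset (Fin (n + 1))) (t : Fin m → ∀ j, C j)

def S13.rel (i j : Fin m) : Prop :=
  (T i).erase (Fin.last n) = (T j).erase (Fin.last n) ∧
    ∀ l ∈ (T i).erase (Fin.last n), t i l = t j l

instance (i : Fin m) : DecidablePred (S13.rel T t i) := fun j => by
  unfold S13.rel; infer_instance

set_option linter.unusedSectionVars false

theorem S13.rel_refl (i : Fin m) : S13.rel T t i i := ⟨rfl, fun _ _ => rfl⟩

theorem S13.rel_symm {i j : Fin m} (h : S13.rel T t i j) : S13.rel T t j i :=
  ⟨h.1.symm, fun l hl => (h.2 l (h.1 ▸ hl)).symm⟩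

theorem S13.rel_trans {i j k : Fin m} (h1 : S13.rel T t i j) (h2 : S13.rel T t j k) :
    S13.rel T t i k :=
  ⟨h1.1.trans h2.1, fun l hl => (h1.2 l hl).trans (h2.2 l (h1.1 ▸ hl))⟩

theorem S13.cls_nonempty (i : Fin m) :
    (Finset.univ.filter (S13.rel T t i)).Nonempty :=
  ⟨i, by simp [S13.rel_refl]⟩

noncomputable def S13.repr (i : Fin m) : Fin m :=
  (Finset.univ.filter (S13.rel T t i)).min' (S13.cls_nonempty T t i)

theorem S13.rel_repr (i : Fin m) : S13.rel T t i (S13.repr T t i) := by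
  have := Finset.min'_mem _ (S13.cls_nonempty T t i)
  simpa [S13.repr] using this

theorem S13.repr_eq_of_rel {i j : Fin m} (h : S13.rel T t i j) :
    S13.repr T t i = S13.repr T t j := by
  unfold S13.repr
  congr 1
  ext k
  simp only [mem_filter, mem_univ, true_and]
  exact ⟨fun hk => S13.rel_trans T t (S13.rel_symm T t h) hk,
    fun hk => S13.rel_trans T t h hk⟩

theorem S13.repr_repr (i : Fin m) : S13.repr T t (S13.repr T t i) = S13.repr T t i :=
  (S13.repr_eq_of_rel T t (S13.rel_repr T t i)).symm

end Aux

theorem stmt13 (n : ℕ) (C : Fin (n + 1) → Type*) [∀ i, Fintype (C i)]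
    [∀ i, DecidableEq (C i)]
    (pa : Fin (n + 1) → Finset (Fin (n + 1))) (hpa : ∀ i j, j ∈ pa i → j < i)
    (cond : (i : Fin (n + 1)) → (∀ j, C j) → ℝ)
    (hdep : ∀ i (v w : ∀ j, C j), v i = w i → (∀ j ∈ pa i, v j = w j) →
      cond i v = cond i w)
    (hnn : ∀ i v, 0 ≤ cond i v)
    (hnorm : ∀ i (v : ∀ j, C j), ∑ x : C i, cond i (Function.update v i x) = 1)
    (m : ℕ) (T : Fin m → Finset (Fin (n + 1))) (t : Fin m → ∀ j, C j)
    (π : Fin m → ℝ) (hπ : ∀ i, 0 < π i) :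
    ∃ (m' : ℕ) (S : Fin m' → Finset (Fin (n + 1))) (s : Fin m' → ∀ j, C j)
      (μ : Fin m' → ℝ),
      (∀ i, 0 < μ i) ∧
      (∀ i, Fin.last n ∉ S i) ∧
      (∀ i, ∃ j, S i = (T j).erase (Fin.last n) ∧ ∀ l ∈ S i, s i l = t j l) ∧
      (∀ i, μ i = ∑ j ∈ Finset.univ.filter
          (fun j => (T j).erase (Fin.last n) = S i ∧ ∀ l ∈ S i, t j l = s i l), π j) ∧
      ∀ v : ∀ j, C j,
        ∑ x : C (Fin.last n),
          ∑ i, π i *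
            ∏ j', (if j' ∈ T i then
                    (if Function.update v (Fin.last n) x j' = t i j' then (1 : ℝ) else 0)
                  else cond j' (Function.update v (Fin.last n) x))
        = ∑ i, μ i * ∏ j' ∈ Finset.univ.erase (Fin.last n),
            (if j' ∈ S i then (if v j' = s i j' then (1 : ℝ) else 0)
             else cond j' v) := by
  classical
  set L := Fin.last n with hLdef
  set R : Finset (Fin m) := Finset.univ.image (S13.repr T t) with hR
  set e : {x // x ∈ R} ≃ Fin R.card := R.equivFin with he
  set rep : Fin R.card → Fin m := fun k => ((e.symm k : {x // x ∈ R}) : Fin m) with hrep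
  have hrepR : ∀ k, rep k ∈ R := fun k => (e.symm k).2
  have hreprrep : ∀ k, S13.repr T t (rep k) = rep k := by
    intro k
    obtain ⟨i0, -, hi0⟩ := Finset.mem_image.mp (hrepR k)
    rw [← hi0, S13.repr_repr]
  set κ : Fin m → Fin R.card :=
    fun i => e ⟨S13.repr T t i, Finset.mem_image_of_mem _ (Finset.mem_univ i)⟩ with hκ
  have hrepκ : ∀ i, rep (κ i) = S13.repr T t i := by
    intro i; simp [hrep, hκ, Equiv.symm_apply_apply]
  have hκ_eq : ∀ i k, κ i = k ↔ S13.rel T t i (rep k) := by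
    intro i k
    constructor
    · intro h; rw [← h, hrepκ]; exact S13.rel_repr T t i
    · intro h
      have h1 : S13.repr T t i = rep k := (S13.repr_eq_of_rel T t h).trans (hreprrep k)
      have h2 : (⟨S13.repr T t i, Finset.mem_image_of_mem _ (Finset.mem_univ i)⟩ :
          {x // x ∈ R}) = e.symm k := Subtype.ext h1
      simp [hκ, h2]
  refine ⟨R.card, fun k => (T (rep k)).erase L, fun k => t (rep k),
    fun k => ∑ j ∈ Finset.univ.filter
      (fun j => (T j).erase L = (T (rep k)).erase L ∧
        ∀ l ∈ (T (rep k)).erase L, t j l = t (rep k) l), π j,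
    ?_, fun k => Finset.notMem_erase _ _, fun k => ⟨rep k, rfl, fun l _ => rfl⟩,
    fun k => rfl, ?_⟩
  · intro k
    apply Finset.sum_pos (fun j _ => hπ j)
    exact ⟨rep k, by simp⟩
  · intro v
    have hκfib : ∀ k, Finset.univ.filter
        (fun j => (T j).erase L = (T (rep k)).erase L ∧
          ∀ l ∈ (T (rep k)).erase L, t j l = t (rep k) l)
        = Finset.univ.filter (fun j => κ j = k) := by
      intro k
      ext j
      simp only [mem_filter, mem_univ, true_and]
      rw [hκ_eq]
      unfold S13.rel
      constructor
      · rintro ⟨h1, h2⟩; exact ⟨h1, fun l hl => h2 l (h1 ▸ hl)⟩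
      · rintro ⟨h1, h2⟩; exact ⟨h1, fun l hl => h2 l (h1 ▸ hl)⟩
    have key : ∀ i, (∑ x : C L, ∏ j', (if j' ∈ T i then
          (if Function.update v L x j' = t i j' then (1 : ℝ) else 0)
        else cond j' (Function.update v L x)))
        = ∏ j' ∈ Finset.univ.erase L, (if j' ∈ (T i).erase L then
            (if v j' = t i j' then (1 : ℝ) else 0) else cond j' v) := by
      intro i
      have hstep : ∀ x : C L, (∏ j', (if j' ∈ T i then
            (if Function.update v L x j' = t i j' then (1 : ℝ) else 0)
          else cond j' (Function.update v L x)))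
          = (if L ∈ T i then (if x = t i L then (1 : ℝ) else 0)
              else cond L (Function.update v L x))
            * ∏ j' ∈ Finset.univ.erase L, (if j' ∈ (T i).erase L then
                (if v j' = t i j' then (1 : ℝ) else 0) else cond j' v) := by
        intro x
        rw [← Finset.mul_prod_erase Finset.univ _ (Finset.mem_univ L)]
        congr 1
        · simp [Function.update_self]
        · apply Finset.prod_congr rfl
          intro j' hj'
          have hne : j' ≠ L := Finset.ne_of_mem_erase hj'
          have hup : Function.update v L x j' = v j' := Function.update_of_ne hne _ _
          have hc : cond j' (Function.update v L x) = cond j' v := by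
            apply hdep
            · exact hup
            · intro l hl
              have hlL : l ≠ L := by
                intro hcontra
                have hlt := hpa j' l hl
                rw [hcontra] at hlt
                exact absurd hlt (not_lt.mpr (Fin.le_last j'))
              exact Function.update_of_ne hlL _ _
          rw [hup, hc]
          by_cases hT : j' ∈ T i
          · simp [hT, Finset.mem_erase, hne]
          · simp [hT, Finset.mem_erase, hne]
      rw [Finset.sum_congr rfl (fun x _ => hstep x), ← Finset.sum_mul]
      by_cases hT : L ∈ T i
      · simp only [hT, if_true]
        rw [show (∑ x : C L, if x = t i L then (1 : ℝ) else 0) = 1 by simp, one_mul]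
      · simp only [hT, if_false]
        rw [hnorm L v, one_mul]
    rw [Finset.sum_comm]
    have L1 : (∑ i, ∑ x : C L, π i * ∏ j', (if j' ∈ T i then
          (if Function.update v L x j' = t i j' then (1 : ℝ) else 0)
        else cond j' (Function.update v L x)))
        = ∑ i, π i * ∏ j' ∈ Finset.univ.erase L, (if j' ∈ (T i).erase L then
            (if v j' = t i j' then (1 : ℝ) else 0) else cond j' v) := by
      refine Finset.sum_congr rfl fun i _ => ?_
      rw [← Finset.mul_sum, key i]
    rw [L1]
    rw [← Finset.sum_fiberwise Finset.univ κ
      (fun j => π j * ∏ j' ∈ Finset.univ.erase L, (if j' ∈ (T j).erase L then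
        (if v j' = t j j' then (1 : ℝ) else 0) else cond j' v))]
    refine Finset.sum_congr rfl fun k _ => ?_
    beta_reduce
    rw [hκfib k, Finset.sum_mul]
    refine Finset.sum_congr rfl fun j hj => ?_
    have hrel : S13.rel T t j (rep k) := (hκ_eq j k).mp (Finset.mem_filter.mp hj).2
    congr 1
    refine Finset.prod_congr rfl fun j' _ => ?_
    rw [hrel.1]
    by_cases hjm : j' ∈ (T (rep k)).erase L
    · simp only [← hLdef, hjm, ↓reduceIte, hrel.2 j' (hrel.1 ▸ hjm)]
    · simp only [← hLdef, hjm, ↓reduceIte]
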